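/- arXiv:1606.08728 — 6 statements merged into one kernel-verified Lean document; each statement's English description precedes it below -/
import Mathlib

section
/- Let X be a real normed space, u, v ∈ X with u ≠ 0, and f a continuous linear functional on X such that f(u) = ‖f‖·‖u‖ (f is a norming functional for u). If the function g : ℝ → ℝ, g(λ) = ‖u + λ•v‖, is differentiable at λ = 0, then f(v) = ‖f‖ · g′(0). In particular, with ‖f‖ = ψ(‖u‖) for a function ψ : ℝ₊ → ℝ₊, one gets f(v) = ψ(‖u‖) · (d/dλ ‖u + λv‖)|_{λ=0}. -/
/-- If `f` is a norming functional for `u ≠ 0` in a real normed space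
(`f u = ‖f‖ * ‖u‖`) and `λ ↦ ‖u + λ • v‖` has derivative `g'` at `0`, then
`f v = ‖f‖ * g'`. -/
theorem norming_functional_eq_norm_mul_deriv
    {X : Type*} [NormedAddCommGroup X] [NormedSpace ℝ X]
    (u v : X) (hu : u ≠ 0) (f : X →L[ℝ] ℝ)
    (hf : f u = ‖f‖ * ‖u‖)
    (g' : ℝ) (hg : HasDerivAt (fun l : ℝ => ‖u + l • v‖) g' 0) :
    f v = ‖f‖ * g' := by
  -- φ l = ‖f‖ * ‖u + l • v‖ - f (u + l • v) is nonneg, zero at 0, hence local min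
  set φ : ℝ → ℝ := fun l => ‖f‖ * ‖u + l • v‖ - f (u + l • v) with hφdef
  have hφ0 : φ 0 = 0 := by simp [φ, hf]
  have hmin : IsLocalMin φ 0 := by
    apply Filter.Eventually.of_forall
    intro l
    rw [hφ0]
    have h1 : f (u + l • v) ≤ ‖f‖ * ‖u + l • v‖ := by
      calc f (u + l • v) ≤ |f (u + l • v)| := le_abs_self _
        _ ≤ ‖f‖ * ‖u + l • v‖ := f.le_opNorm _
    simp only [φ]
    linarith
  have hlin : HasDerivAt (fun l : ℝ => f (u + l • v)) (f v) 0 := by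
    have : (fun l : ℝ => f (u + l • v)) = fun l : ℝ => f u + l * f v := by
      ext l; simp [mul_comm]
    rw [this]
    simpa using ((hasDerivAt_id (0 : ℝ)).mul_const (f v)).const_add (f u)
  have hφ' : HasDerivAt φ (‖f‖ * g' - f v) 0 := (hg.const_mul ‖f‖).sub hlin
  have := hmin.hasDerivAt_eq_zero hφ'
  linarith
end

section
/- (Fenchel duality, part (i).) Let E be a real Hausdorff locally convex topological vector space with topological dual E′, let u : E → ℝ ∪ {+∞} be a proper convex lower semicontinuous functional, and let Δ ⊆ E be a convex set. Assume μ := inf { u(e) : e ∈ Δ } is a real number and that u is finite and continuous at some point of Δ. Then μ = max { −u*(−e′) − h(e′; cl Δ) : e′ ∈ E′ with h(e′; cl Δ) < +∞ }, i.e. there exists e′ ∈ E′ attaining this value, and for every f ∈ E′ one has −u*(−f) − h(f; cl Δ) ≤ μ. -/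
open scoped Topology

/-- The convex (Legendre–Fenchel) conjugate `u*(f) = sup_e (f e − u e)` of an
`ℝ ∪ {+∞}`-valued functional, with respect to the duality `⟨E, E'⟩`. -/
noncomputable def fenchelConj {E : Type*} [AddCommGroup E] [Module ℝ E]
    [TopologicalSpace E] (u : E → EReal) (f : E →L[ℝ] ℝ) : EReal :=
  ⨆ e : E, ((f e : EReal) - u e)

/-- The support function `h(f; S) = sup_{e ∈ S} f e` of a subset `S ⊆ E`. -/
noncomputable def supportFn {E : Type*} [AddCommGroup E] [Module ℝ E]
    [TopologicalSpace E] (f : E →L[ℝ] ℝ) (S : Set E) : EReal :=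
  ⨆ e ∈ S, (f e : EReal)

/-- Fenchel duality, part (i): if `u` is proper convex lsc on a real
Hausdorff locally convex space `E`, `Δ ⊆ E` is convex, `μ = inf_Δ u ∈ ℝ`, and `u` is
finite and continuous at some point of `Δ`, then
`μ = max {−u*(−e') − h(e'; cl Δ) : e' ∈ E', h(e'; cl Δ) < +∞}`. -/
theorem fenchel_duality_value
    {E : Type*} [AddCommGroup E] [Module ℝ E] [TopologicalSpace E]
    [IsTopologicalAddGroup E] [ContinuousSMul ℝ E] [LocallyConvexSpace ℝ E] [T2Space E]
    (u : E → EReal)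
    (hne_bot : ∀ e : E, u e ≠ ⊥)
    (hproper : ∃ e : E, u e ≠ ⊤)
    (hconv : ∀ x y : E, ∀ a b : ℝ, 0 ≤ a → 0 ≤ b → a + b = 1 →
      u (a • x + b • y) ≤ (a : EReal) * u x + (b : EReal) * u y)
    (hlsc : LowerSemicontinuous u)
    (Δ : Set E) (hΔ : Convex ℝ Δ)
    (μ : ℝ) (hμ : (μ : EReal) = ⨅ e ∈ Δ, u e)
    (hcont : ∃ e₀ ∈ Δ, u e₀ ≠ ⊤ ∧ ContinuousAt u e₀) :
    (∃ e' : E →L[ℝ] ℝ, supportFn e' (closure Δ) ≠ ⊤ ∧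
        -(fenchelConj u (-e')) - supportFn e' (closure Δ) = (μ : EReal)) ∧
      ∀ f : E →L[ℝ] ℝ,
        -(fenchelConj u (-f)) - supportFn f (closure Δ) ≤ (μ : EReal) := by
  obtain ⟨e₀, he₀Δ, he₀top, hcontat⟩ := hcont
  -- Weak duality
  have weak : ∀ f : E →L[ℝ] ℝ,
      -(fenchelConj u (-f)) - supportFn f (closure Δ) ≤ (μ : EReal) := by
    intro f
    rw [hμ]
    refine le_iInf₂ fun e he => ?_
    rcases eq_or_ne (u e) ⊤ with htop | htop
    · rw [htop]; exact le_top
    obtain ⟨s, hs⟩ : ∃ s : ℝ, u e = (s : EReal) :=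
      ⟨(u e).toReal, (EReal.coe_toReal htop (hne_bot e)).symm⟩
    have h1 : (((-f) e : ℝ) : EReal) - u e ≤ fenchelConj u (-f) :=
      le_iSup (fun e => (((-f) e : ℝ) : EReal) - u e) e
    have h2 : ((f e : ℝ) : EReal) ≤ supportFn f (closure Δ) :=
      le_iSup₂ (f := fun (e : E) (_ : e ∈ closure Δ) => ((f e : ℝ) : EReal)) e
        (subset_closure he)
    have h1' : ((-(f e) - s : ℝ) : EReal) ≤ fenchelConj u (-f) := by
      rw [EReal.coe_sub]
      simpa [hs] using h1
    have h3 : -(fenchelConj u (-f)) ≤ ((f e + s : ℝ) : EReal) := by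
      have := EReal.neg_le_neg_iff.mpr h1'
      rw [← EReal.coe_neg] at this
      convert this using 2
      ring
    calc -(fenchelConj u (-f)) - supportFn f (closure Δ)
        ≤ ((f e + s : ℝ) : EReal) - ((f e : ℝ) : EReal) := EReal.sub_le_sub h3 h2
      _ = (s : EReal) := by rw [← EReal.coe_sub]; norm_num
      _ = u e := hs.symm
  refine ⟨?_, weak⟩
  -- Setup
  set r₀ : ℝ := (u e₀).toReal with hr₀
  have hue₀ : u e₀ = (r₀ : EReal) := (EReal.coe_toReal he₀top (hne_bot e₀)).symm
  have hμr₀ : μ ≤ r₀ := by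
    have h : (μ : EReal) ≤ (r₀ : EReal) := by
      rw [hμ, ← hue₀]; exact iInf₂_le e₀ he₀Δ
    exact_mod_cast h
  set A : Set (E × ℝ) := {p | u p.1 < (p.2 : EReal)} with hAdef
  have hAconv : Convex ℝ A := by
    rintro ⟨x, s⟩ hx ⟨y, t⟩ hy a b ha hb hab
    simp only [hAdef, Set.mem_setOf_eq] at hx hy ⊢
    obtain ⟨p, hp⟩ : ∃ p : ℝ, u x = (p : EReal) :=
      ⟨(u x).toReal, (EReal.coe_toReal (hx.trans (EReal.coe_lt_top s)).ne (hne_bot x)).symm⟩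
    obtain ⟨q, hq⟩ : ∃ q : ℝ, u y = (q : EReal) :=
      ⟨(u y).toReal, (EReal.coe_toReal (hy.trans (EReal.coe_lt_top t)).ne (hne_bot y)).symm⟩
    have hps : p < s := by rw [hp] at hx; exact_mod_cast hx
    have hqt : q < t := by rw [hq] at hy; exact_mod_cast hy
    have hreal : a * p + b * q < a * s + b * t := by
      rcases ha.lt_or_eq with ha' | ha'
      · have h1 : a * p < a * s := by exact mul_lt_mul_of_pos_left hps ha'
        have h2 : b * q ≤ b * t := mul_le_mul_of_nonneg_left hqt.le hb
        linarith
      · have hb1 : b = 1 := by linarith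
        rw [← ha', hb1]; simpa using hqt
    have hsmul : (a • ((x, s) : E × ℝ) + b • ((y, t) : E × ℝ)) =
        ((a • x + b • y, a * s + b * t) : E × ℝ) := by
      simp [Prod.ext_iff, smul_eq_mul]
    rw [hsmul]
    calc u (a • x + b • y) ≤ (a : EReal) * u x + (b : EReal) * u y :=
          hconv x y a b ha hb hab
      _ = ((a * p + b * q : ℝ) : EReal) := by
          rw [hp, hq, ← EReal.coe_mul, ← EReal.coe_mul, ← EReal.coe_add]
      _ < ((a * s + b * t : ℝ) : EReal) := by exact_mod_cast hreal
  -- interior point of A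
  have hU : {e | u e < ((r₀ + 1 : ℝ) : EReal)} ∈ 𝓝 e₀ := by
    have : Set.Iio ((r₀ + 1 : ℝ) : EReal) ∈ 𝓝 (u e₀) := by
      apply isOpen_Iio.mem_nhds
      rw [hue₀, Set.mem_Iio]
      exact_mod_cast lt_add_one r₀
    exact hcontat.preimage_mem_nhds this
  have hIntPoint : ∀ s : ℝ, r₀ + 1 < s → ((e₀, s) : E × ℝ) ∈ interior A := by
    intro s hstatus
    rw [mem_interior_iff_mem_nhds]
    have hmem : {e | u e < ((r₀ + 1 : ℝ) : EReal)} ×ˢ Set.Ioi (r₀ + 1) ∈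
        𝓝 ((e₀, s) : E × ℝ) := prod_mem_nhds hU (Ioi_mem_nhds hstatus)
    refine Filter.mem_of_superset hmem ?_
    rintro ⟨e, t⟩ ⟨h1, h2⟩
    have : ((r₀ + 1 : ℝ) : EReal) < (t : EReal) := by exact_mod_cast h2
    exact lt_trans h1 this
  have hp₀ : ((e₀, r₀ + 2) : E × ℝ) ∈ interior A := hIntPoint _ (by linarith)
  set B : Set (E × ℝ) := Δ ×ˢ Set.Iic μ with hBdef
  have hBconv : Convex ℝ B := hΔ.prod (convex_Iic μ)
  have hdisj : Disjoint (interior A) B := by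
    rw [Set.disjoint_left]
    rintro ⟨e, t⟩ hpA ⟨heΔ, htμ⟩
    have hA' : ((e, t) : E × ℝ) ∈ A := interior_subset hpA
    simp only [hAdef, Set.mem_setOf_eq] at hA'
    have hμe : (μ : EReal) ≤ u e := hμ ▸ iInf₂_le e heΔ
    have htμ' : (t : EReal) ≤ (μ : EReal) := by exact_mod_cast htμ
    exact absurd (lt_of_le_of_lt hμe (lt_of_lt_of_le hA' htμ')) (lt_irrefl _)
  obtain ⟨f, c, hfA, hfB⟩ :=
    geometric_hahn_banach_open hAconv.interior isOpen_interior hBconv hdisj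
  -- extend strict inequality on interior A to ≤ on A
  have hfA' : ∀ p ∈ A, f p ≤ c := by
    intro p hp
    have key : ∀ l : ℝ, 0 < l → l ≤ 1 →
        l * f (e₀, r₀ + 2) + (1 - l) * f p < c := by
      intro l hl hl1
      have hmem := hAconv.combo_interior_self_mem_interior (b := 1 - l) hp₀ hp hl
        (by linarith) (by ring)
      have h5 := hfA _ hmem
      rw [map_add, map_smul, map_smul, smul_eq_mul, smul_eq_mul] at h5
      exact h5
    have htend : Filter.Tendsto (fun l : ℝ => l * f (e₀, r₀ + 2) + (1 - l) * f p)
        (𝓝[>] (0 : ℝ)) (𝓝 (f p)) := by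
      have hcont' : Continuous fun l : ℝ => l * f (e₀, r₀ + 2) + (1 - l) * f p :=
        (continuous_id.mul continuous_const).add
          ((continuous_const.sub continuous_id).mul continuous_const)
      have h0 := hcont'.tendsto 0
      simp only [zero_mul, sub_zero, one_mul, zero_add] at h0
      exact h0.mono_left nhdsWithin_le_nhds
    refine le_of_tendsto htend ?_
    have hIoc : Set.Ioc (0 : ℝ) 1 ∈ 𝓝[>] (0 : ℝ) :=
      Ioc_mem_nhdsGT_of_mem ⟨le_refl 0, one_pos⟩
    exact Filter.eventually_of_mem hIoc fun l hl => (key l hl.1 hl.2).le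
  set g : E →L[ℝ] ℝ := f.comp (ContinuousLinearMap.inl ℝ E ℝ) with hgdef
  set α : ℝ := f (0, 1) with hαdef
  have hsplit : ∀ (e : E) (t : ℝ), f (e, t) = g e + α * t := by
    intro e t
    have hdecomp : ((e, t) : E × ℝ) = (e, 0) + t • ((0 : E), (1 : ℝ)) := by
      simp [Prod.ext_iff]
    rw [hdecomp, map_add, map_smul]
    simp [hgdef, hαdef, smul_eq_mul, mul_comm]
  -- α < 0
  have h1 : c ≤ g e₀ + α * μ := by
    have := hfB _ (⟨he₀Δ, le_refl μ⟩ : ((e₀, μ) : E × ℝ) ∈ B)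
    rwa [hsplit] at this
  have h2 : g e₀ + α * (r₀ + 2) < c := by
    have := hfA _ hp₀
    rwa [hsplit] at this
  have hαneg : α < 0 := by
    by_contra h
    push_neg at h
    have : α * μ ≤ α * (r₀ + 2) := mul_le_mul_of_nonneg_left (by linarith) h
    linarith
  set β : ℝ := -α with hβdef
  have hβpos : 0 < β := by simp [hβdef]; linarith
  set φ : E →L[ℝ] ℝ := (-(β⁻¹)) • g with hφdef
  have hφ : ∀ e, φ e = -(g e) / β := by
    intro e
    rw [hφdef]
    simp only [ContinuousLinearMap.smul_apply, smul_eq_mul]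
    ring
  -- support function bound
  have hΔbound : ∀ e ∈ Δ, φ e ≤ -c / β - μ := by
    intro e he
    have hc := hfB _ (⟨he, le_refl μ⟩ : ((e, μ) : E × ℝ) ∈ B)
    rw [hsplit] at hc
    have h' : -(g e) ≤ -c - β * μ := by
      simp only [hβdef] at hc ⊢; linarith
    rw [hφ]
    calc -(g e) / β ≤ (-c - β * μ) / β := (div_le_div_iff_of_pos_right hβpos).mpr h'
      _ = -c / β - μ := by field_simp
  have hclosbound : ∀ e ∈ closure Δ, φ e ≤ -c / β - μ := by
    intro e he
    have hsub : closure Δ ⊆ {x | φ x ≤ -c / β - μ} :=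
      closure_minimal (fun x hx => hΔbound x hx)
        (isClosed_le φ.continuous continuous_const)
    exact hsub he
  have hSF_le : supportFn φ (closure Δ) ≤ ((-c / β - μ : ℝ) : EReal) :=
    iSup₂_le fun e he => EReal.coe_le_coe_iff.mpr (hclosbound e he)
  have hSF_ge : ((φ e₀ : ℝ) : EReal) ≤ supportFn φ (closure Δ) :=
    le_iSup₂ (f := fun (e : E) (_ : e ∈ closure Δ) => ((φ e : ℝ) : EReal)) e₀
      (subset_closure he₀Δ)
  -- conjugate bound
  have hconj_le : ∀ e : E, (((-φ) e : ℝ) : EReal) - u e ≤ ((c / β : ℝ) : EReal) := by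
    intro e
    rcases eq_or_ne (u e) ⊤ with ht | ht
    · rw [ht, EReal.sub_top]
      exact bot_le
    obtain ⟨s, hs⟩ : ∃ s : ℝ, u e = (s : EReal) :=
      ⟨(u e).toReal, (EReal.coe_toReal ht (hne_bot e)).symm⟩
    have hAe : ∀ t : ℝ, s < t → g e + α * t ≤ c := by
      intro t htt
      have hmem : ((e, t) : E × ℝ) ∈ A := by
        simp only [hAdef, Set.mem_setOf_eq, hs]
        exact_mod_cast htt
      have := hfA' _ hmem
      rwa [hsplit] at this
    have hge : g e ≤ c + β * s := by
      by_contra h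
      push_neg at h
      have hnum : 0 < g e - c - β * s := by linarith
      have hden : (0 : ℝ) < 2 * β := by linarith
      set d : ℝ := (g e - c - β * s) / (2 * β) with hddef
      have hd : 0 < d := div_pos hnum hden
      clear_value d
      have hbd : β * d = (g e - c - β * s) / 2 := by
        rw [hddef]
        field_simp
      have h7 := hAe (s + d) (by linarith)
      have hα' : α = -β := by rw [hβdef]; ring
      rw [hα'] at h7
      rw [show -β * (s + d) = -(β * s) - β * d from by ring] at h7
      clear_value β α
      linarith only [h7, hbd, hnum]
    rw [hs, ← EReal.coe_sub, EReal.coe_le_coe_iff]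
    have hφe : (-φ) e = g e / β := by
      simp only [ContinuousLinearMap.neg_apply]
      rw [hφ]
      ring
    rw [hφe]
    have hdiv := (div_le_div_iff_of_pos_right hβpos).mpr hge
    have hcb : (c + β * s) / β = c / β + s := by field_simp
    linarith [hdiv.trans_eq hcb]
  have hFC_le : fenchelConj u (-φ) ≤ ((c / β : ℝ) : EReal) := iSup_le hconj_le
  have hFC_ge : ((-φ e₀ - r₀ : ℝ) : EReal) ≤ fenchelConj u (-φ) := by
    have h := le_iSup (fun e => (((-φ) e : ℝ) : EReal) - u e) e₀
    rw [hue₀] at h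
    simpa [EReal.coe_sub, fenchelConj] using h
  -- finiteness
  have hFCtop : fenchelConj u (-φ) ≠ ⊤ := (lt_of_le_of_lt hFC_le (EReal.coe_lt_top _)).ne
  have hFCbot : fenchelConj u (-φ) ≠ ⊥ := (lt_of_lt_of_le (EReal.bot_lt_coe _) hFC_ge).ne'
  have hSFtop : supportFn φ (closure Δ) ≠ ⊤ :=
    (lt_of_le_of_lt hSF_le (EReal.coe_lt_top _)).ne
  have hSFbot : supportFn φ (closure Δ) ≠ ⊥ :=
    (lt_of_lt_of_le (EReal.bot_lt_coe _) hSF_ge).ne'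
  set P : ℝ := (fenchelConj u (-φ)).toReal with hPdef
  have hP : fenchelConj u (-φ) = (P : EReal) := (EReal.coe_toReal hFCtop hFCbot).symm
  set H : ℝ := (supportFn φ (closure Δ)).toReal with hHdef
  have hH : supportFn φ (closure Δ) = (H : EReal) := (EReal.coe_toReal hSFtop hSFbot).symm
  have hval : -(fenchelConj u (-φ)) - supportFn φ (closure Δ) = ((-P - H : ℝ) : EReal) := by
    rw [hP, hH, ← EReal.coe_neg, ← EReal.coe_sub]
  have hPle : P ≤ c / β := by
    have := hP ▸ hFC_le
    exact_mod_cast this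
  have hHle : H ≤ -c / β - μ := by
    have := hH ▸ hSF_le
    exact_mod_cast this
  have hle : -P - H ≤ μ := by
    have := weak φ
    rw [hval] at this
    exact_mod_cast this
  have hgee : μ ≤ -P - H := by
    have h9 : P + H ≤ -μ := by
      have h10 := add_le_add hPle hHle
      calc P + H ≤ c / β + (-c / β - μ) := h10
        _ = -μ := by ring
    linarith only [h9]
  refine ⟨φ, hSFtop, ?_⟩
  rw [hval]
  exact_mod_cast le_antisymm hle hgee
end

section
/- (Fenchel duality, part (ii): characterization of minimizers.) Let E be a real Hausdorff locally convex topological vector space with topological dual E′, u : E → ℝ ∪ {+∞} proper convex lower semicontinuous, and Δ ⊆ E a closed convex set. Assume μ := inf { u(e) : e ∈ Δ } is a real number and u is finite and continuous at some point of Δ. Then for e ∈ E the following are equivalent: (a) e ∈ Δ and u(e) = μ; (b) there exists e′ ∈ E′ such that u(e) + u*(−e′) = −e′(e) and e ∈ Δ with h(e′; Δ) = e′(e). (Condition (b) says e ∈ ∂u*(−e′) ∩ ∂h(e′; Δ).) -/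
private lemma ereal_exists_real {x : EReal} (hb : x ≠ ⊥) (ht : x ≠ ⊤) :
    ∃ r : ℝ, x = (r : EReal) :=
  ⟨x.toReal, (EReal.coe_toReal ht hb).symm⟩

open Filter Topology

/-- Fenchel duality, part (ii): characterization of minimizers: under the
hypotheses of part (i), with `Δ` closed convex, `e ∈ Δ` minimizes `u` on `Δ` (with value
`μ`) iff there is `e' ∈ E'` with `u e + u*(−e') = −e'(e)` and `e ∈ Δ`, `h(e'; Δ) = e'(e)`,
i.e. `e ∈ ∂u*(−e') ∩ ∂h(e'; Δ)`. -/
theorem fenchel_duality_minimizers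
    {E : Type*} [AddCommGroup E] [Module ℝ E] [TopologicalSpace E]
    [IsTopologicalAddGroup E] [ContinuousSMul ℝ E] [LocallyConvexSpace ℝ E] [T2Space E]
    (u : E → EReal)
    (hne_bot : ∀ e : E, u e ≠ ⊥)
    (hproper : ∃ e : E, u e ≠ ⊤)
    (hconv : ∀ x y : E, ∀ a b : ℝ, 0 ≤ a → 0 ≤ b → a + b = 1 →
      u (a • x + b • y) ≤ (a : EReal) * u x + (b : EReal) * u y)
    (hlsc : LowerSemicontinuous u)
    (Δ : Set E) (hΔconv : Convex ℝ Δ) (hΔcl : IsClosed Δ)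
    (μ : ℝ) (hμ : (μ : EReal) = ⨅ e ∈ Δ, u e)
    (hcont : ∃ e₀ ∈ Δ, u e₀ ≠ ⊤ ∧ ContinuousAt u e₀) :
    ∀ e : E,
      (e ∈ Δ ∧ u e = (μ : EReal)) ↔
      (∃ e' : E →L[ℝ] ℝ,
        u e + fenchelConj u (-e') = ((-e') e : EReal) ∧
        e ∈ Δ ∧ supportFn e' Δ = (e' e : EReal)) := by
  have hμle : ∀ x ∈ Δ, (μ : EReal) ≤ u x := by
    intro x hx
    rw [hμ]
    exact iInf₂_le x hx
  intro e
  constructor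
  · -- forward direction: minimizer ⇒ existence of e'
    rintro ⟨heΔ, hue⟩
    obtain ⟨e₀, he₀Δ, he₀top, he₀cont⟩ := hcont
    obtain ⟨r₀, hr₀⟩ := ereal_exists_real (hne_bot e₀) he₀top
    set epi : Set (E × ℝ) := {p | u p.1 ≤ (p.2 : EReal)} with hepi_def
    have hepiconv : Convex ℝ epi := by
      rintro ⟨x, s⟩ hxs ⟨y, t⟩ hyt a b ha hb hab
      simp only [hepi_def, Set.mem_setOf_eq, Prod.smul_mk, Prod.mk_add_mk,
        smul_eq_mul] at hxs hyt ⊢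
      obtain ⟨rx, hrx⟩ := ereal_exists_real (hne_bot x) (ne_top_of_le_ne_top (EReal.coe_ne_top s) hxs)
      obtain ⟨ry, hry⟩ := ereal_exists_real (hne_bot y) (ne_top_of_le_ne_top (EReal.coe_ne_top t) hyt)
      rw [hrx, EReal.coe_le_coe_iff] at hxs
      rw [hry, EReal.coe_le_coe_iff] at hyt
      calc u (a • x + b • y) ≤ (a : EReal) * u x + (b : EReal) * u y :=
            hconv x y a b ha hb hab
        _ = ((a * rx + b * ry : ℝ) : EReal) := by
            rw [hrx, hry, ← EReal.coe_mul, ← EReal.coe_mul, ← EReal.coe_add]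
        _ ≤ ((a * s + b * t : ℝ) : EReal) := by
            apply EReal.coe_le_coe_iff.2
            have := mul_le_mul_of_nonneg_left hxs ha
            have := mul_le_mul_of_nonneg_left hyt hb
            linarith
    have hslab : ∀ t : ℝ, r₀ + 1 < t → (e₀, t) ∈ interior epi := by
      intro t ht
      rw [mem_interior_iff_mem_nhds]
      have hW : {x | u x < ((r₀ + 1 : ℝ) : EReal)} ∈ 𝓝 e₀ := by
        have : Set.Iio ((r₀ + 1 : ℝ) : EReal) ∈ 𝓝 (u e₀) := by
          apply isOpen_Iio.mem_nhds
          rw [hr₀, Set.mem_Iio]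
          exact_mod_cast lt_add_one r₀
        exact he₀cont.preimage_mem_nhds this
      have hprod : {x | u x < ((r₀ + 1 : ℝ) : EReal)} ×ˢ Set.Ioi (r₀ + 1) ∈ 𝓝 (e₀, t) :=
        prod_mem_nhds hW (Ioi_mem_nhds ht)
      apply Filter.mem_of_superset hprod
      rintro ⟨x, s⟩ ⟨hx, hs⟩
      simp only [hepi_def, Set.mem_setOf_eq]
      calc u x ≤ ((r₀ + 1 : ℝ) : EReal) := le_of_lt hx
        _ ≤ (s : EReal) := EReal.coe_le_coe_iff.2 (le_of_lt hs)
    have hdisj : Disjoint (interior epi) (Δ ×ˢ ({μ} : Set ℝ)) := by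
      rw [Set.disjoint_left]
      rintro ⟨x, t⟩ hint ⟨hxΔ, ht⟩
      simp only [Set.mem_singleton_iff] at ht
      have hmem : epi ∈ 𝓝 (x, μ) := mem_interior_iff_mem_nhds.1 (ht ▸ hint)
      have hc : Continuous fun s : ℝ => ((x, s) : E × ℝ) := by fun_prop
      have hpre : {s : ℝ | u x ≤ (s : EReal)} ∈ 𝓝 μ := hc.continuousAt.preimage_mem_nhds hmem
      have hne : ({s : ℝ | u x ≤ (s : EReal)} ∩ Set.Iio μ).Nonempty :=
        Filter.nonempty_of_mem
          (Filter.inter_mem (nhdsWithin_le_nhds hpre) self_mem_nhdsWithin)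
      obtain ⟨s, hs1, hs2⟩ := hne
      have h1 : (μ : EReal) ≤ (s : EReal) := le_trans (hμle x hxΔ) hs1
      rw [EReal.coe_le_coe_iff] at h1
      exact absurd hs2 (not_lt.2 h1)
    obtain ⟨F, c, hF1, hF2⟩ :=
      geometric_hahn_banach_open hepiconv.interior isOpen_interior
        (hΔconv.prod (convex_singleton μ)) hdisj
    set f : E →L[ℝ] ℝ := F.comp (ContinuousLinearMap.inl ℝ E ℝ) with hf_def
    set β : ℝ := F (0, 1) with hβ_def
    have hFp : ∀ p : E × ℝ, F p = f p.1 + p.2 * β := by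
      rintro ⟨x, t⟩
      show F (x, t) = f x + t * β
      have hxt : ((x, t) : E × ℝ) = (x, 0) + t • ((0 : E), (1 : ℝ)) := by
        simp [Prod.ext_iff]
      conv_lhs => rw [hxt]
      rw [map_add, map_smul, smul_eq_mul]
      simp only [hf_def, hβ_def, ContinuousLinearMap.comp_apply,
        ContinuousLinearMap.inl_apply]
    have hz2 : (e₀, r₀ + 2) ∈ interior epi := hslab _ (by linarith)
    have hfe₀μ : c ≤ f e₀ + μ * β := by
      have := hF2 (e₀, μ) ⟨he₀Δ, rfl⟩
      rwa [hFp] at this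
    have hβneg : β < 0 := by
      rcases lt_trichotomy β 0 with h | h | h
      · exact h
      · exfalso
        have h1 := hF1 _ hz2
        rw [hFp] at h1
        simp only [h] at h1 hfe₀μ
        simp at h1 hfe₀μ
        linarith
      · exfalso
        set t : ℝ := max (r₀ + 2) ((c - f e₀) / β + 1) with ht_def
        have ht : r₀ + 1 < t := lt_of_lt_of_le (by linarith) (le_max_left _ _)
        have h1 := hF1 _ (hslab t ht)
        rw [hFp] at h1
        have h2 : (c - f e₀) / β + 1 ≤ t := le_max_right _ _
        have h3 : (c - f e₀) / β < t := by linarith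
        rw [div_lt_iff₀ h] at h3
        simp only at h1
        linarith
    have hb' : (0 : ℝ) < -β := by linarith
    have hepi_le : ∀ p ∈ epi, f p.1 + p.2 * β ≤ c := by
      rintro ⟨x, t⟩ hp
      have key2 : ∀ a : ℝ, 0 < a → a ≤ 1 →
          (1 - a) * F (x, t) + a * F (e₀, r₀ + 2) ≤ c := by
        intro a ha ha1
        have hmem := hepiconv.combo_self_interior_mem_interior hp hz2
          (by linarith : (0:ℝ) ≤ 1 - a) ha (by ring)
        have := hF1 _ hmem
        rw [map_add, map_smul, map_smul, smul_eq_mul, smul_eq_mul] at this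
        exact le_of_lt this
      have htend : Tendsto (fun a : ℝ => (1 - a) * F (x, t) + a * F (e₀, r₀ + 2))
          (𝓝[>] 0) (𝓝 (F (x, t))) := by
        have hcont' : Continuous fun a : ℝ => (1 - a) * F (x, t) + a * F (e₀, r₀ + 2) := by
          fun_prop
        have := hcont'.tendsto 0
        simp only [sub_zero, one_mul, zero_mul, add_zero] at this
        exact this.mono_left nhdsWithin_le_nhds
      have hev : ∀ᶠ a in 𝓝[>] (0:ℝ),
          (1 - a) * F (x, t) + a * F (e₀, r₀ + 2) ≤ c := by
        filter_upwards [Ioc_mem_nhdsGT_of_mem ⟨le_refl (0:ℝ), zero_lt_one⟩] with a ha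
        exact key2 a ha.1 ha.2
      have := le_of_tendsto htend hev
      rwa [hFp] at this
    set g : E →L[ℝ] ℝ := (-β)⁻¹ • f with hg_def
    have hgx : ∀ x : E, g x = (-β)⁻¹ * f x := fun x => rfl
    set c' : ℝ := c / (-β) with hc'_def
    have hb0 : (-β) ≠ 0 := ne_of_gt hb'
    have hgepi : ∀ (x : E) (t : ℝ), u x ≤ (t : EReal) → g x - t ≤ c' := by
      intro x t hx
      have h1 := hepi_le (x, t) hx
      simp only at h1
      rw [hgx, hc'_def, le_div_iff₀ hb']
      have key : ((-β)⁻¹ * f x - t) * (-β) = f x + t * β := by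
        calc ((-β)⁻¹ * f x - t) * (-β) = ((-β)⁻¹ * (-β)) * f x + t * β := by ring
          _ = f x + t * β := by rw [inv_mul_cancel₀ hb0, one_mul]
      linarith [key]
    have hΔge : ∀ y ∈ Δ, c' + μ ≤ g y := by
      intro y hy
      have h1 := hF2 (y, μ) ⟨hy, rfl⟩
      rw [hFp] at h1
      simp only at h1
      rw [hgx, hc'_def, ← le_sub_iff_add_le, div_le_iff₀ hb']
      have key : ((-β)⁻¹ * f y - μ) * (-β) = f y + μ * β := by
        calc ((-β)⁻¹ * f y - μ) * (-β) = ((-β)⁻¹ * (-β)) * f y + μ * β := by ring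
          _ = f y + μ * β := by rw [inv_mul_cancel₀ hb0, one_mul]
      linarith [key]
    have hce : c' = g e - μ := by
      have h1 : g e - μ ≤ c' := hgepi e μ (le_of_eq hue)
      have h2 : c' + μ ≤ g e := hΔge e heΔ
      linarith
    have hconj_le : fenchelConj u g ≤ (c' : EReal) := by
      apply iSup_le
      intro x
      by_cases hx : u x = ⊤
      · rw [hx]
        rw [EReal.sub_top]
        exact bot_le
      · obtain ⟨rx, hrx⟩ := ereal_exists_real (hne_bot x) hx
        rw [hrx, ← EReal.coe_sub]
        exact EReal.coe_le_coe_iff.2 (hgepi x rx hrx.le)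
    have hconj_eq : fenchelConj u g = (c' : EReal) := by
      apply le_antisymm hconj_le
      have := le_iSup (fun x => ((g x : ℝ) : EReal) - u x) e
      rw [hue, ← EReal.coe_sub] at this
      calc (c' : EReal) = ((g e - μ : ℝ) : EReal) := by rw [hce]
        _ ≤ fenchelConj u g := this
    refine ⟨-g, ?_, heΔ, ?_⟩
    · rw [neg_neg, hue, hconj_eq, ← EReal.coe_add]
      congr 1
      linarith
    · apply le_antisymm
      · apply iSup₂_le
        intro y hy
        simp only [ContinuousLinearMap.neg_apply]
        apply EReal.coe_le_coe_iff.2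
        have := hΔge y hy
        linarith
      · exact le_iSup₂ (f := fun y (_ : y ∈ Δ) => (((-g) y : ℝ) : EReal)) e heΔ
  · -- backward direction
    rintro ⟨e', H1, heΔ, H2⟩
    obtain ⟨e₁, he₁⟩ := hproper
    obtain ⟨r₁, hr₁⟩ := ereal_exists_real (hne_bot e₁) he₁
    have hlow : (((-e') e₁ - r₁ : ℝ) : EReal) ≤ fenchelConj u (-e') := by
      have := le_iSup (fun x => (((-e') x : ℝ) : EReal) - u x) e₁
      rwa [hr₁, ← EReal.coe_sub] at this
    have hconj_ne_bot : fenchelConj u (-e') ≠ ⊥ := by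
      intro h
      rw [h] at hlow
      exact (EReal.coe_ne_bot ((-e') e₁ - r₁)) (le_bot_iff.1 hlow)
    have hue_ne_top : u e ≠ ⊤ := by
      intro h
      rw [h, EReal.top_add_of_ne_bot hconj_ne_bot] at H1
      exact (EReal.coe_ne_top _) H1.symm
    obtain ⟨r, hr⟩ := ereal_exists_real (hne_bot e) hue_ne_top
    have hconj_ne_top : fenchelConj u (-e') ≠ ⊤ := by
      intro h
      rw [hr, h, EReal.add_top_of_ne_bot (EReal.coe_ne_bot r)] at H1
      exact (EReal.coe_ne_top _) H1.symm
    obtain ⟨s, hs⟩ := ereal_exists_real hconj_ne_bot hconj_ne_top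
    have hrs : r + s = (-e') e := by
      rw [hr, hs, ← EReal.coe_add] at H1
      exact_mod_cast H1
    have hlb : ∀ x ∈ Δ, (r : EReal) ≤ u x := by
      intro x hx
      by_cases hx' : u x = ⊤
      · rw [hx']; exact le_top
      obtain ⟨rx, hrx⟩ := ereal_exists_real (hne_bot x) hx'
      rw [hrx]
      apply EReal.coe_le_coe_iff.2
      have h1 : (((-e') x - rx : ℝ) : EReal) ≤ (s : EReal) := by
        rw [← hs]
        have := le_iSup (fun y => (((-e') y : ℝ) : EReal) - u y) x
        rwa [hrx, ← EReal.coe_sub] at this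
      rw [EReal.coe_le_coe_iff] at h1
      have h2 : (e' x : EReal) ≤ (e' e : EReal) := by
        rw [← H2]
        exact le_iSup₂ (f := fun y (_ : y ∈ Δ) => ((e' y : ℝ) : EReal)) x hx
      rw [EReal.coe_le_coe_iff] at h2
      simp only [ContinuousLinearMap.neg_apply] at h1 hrs
      linarith
    have hμr : μ = r := by
      have h1 : (μ : EReal) ≤ (r : EReal) := hr ▸ hμle e heΔ
      have h2 : (r : EReal) ≤ (μ : EReal) := by
        rw [hμ]
        exact le_iInf₂ hlb
      exact le_antisymm (EReal.coe_le_coe_iff.1 h1) (EReal.coe_le_coe_iff.1 h2)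
    exact ⟨heΔ, by rw [hr, hμr]⟩
end

section
/- Let E be a real Hausdorff locally convex topological vector space with topological dual E′, and Φ : E → ℝ ∪ {+∞} a proper convex lower semicontinuous functional. Let e′₀, …, e′ₙ ∈ E′, α₀, …, αₙ ∈ ℝ, and Γ = { e ∈ E : e′_k(e) = α_k for k = 0,…,n }. Suppose Φ is finite and continuous at some point of Γ, and that ē ∈ Γ attains the finite infimum of Φ over Γ. Then there exist λ̄₀, …, λ̄ₙ ∈ ℝ such that Φ(ē) + Φ*( Σ_{k=0}^{n} λ̄_k e′_k ) = Σ_{k=0}^{n} λ̄_k α_k; that is, ē ∈ ∂Φ*( Σ_{k=0}^{n} λ̄_k e′_k ) = B_Φ( Σ λ̄_k e′_k ). -/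
set_option maxHeartbeats 1000000


/-- if `Φ` is a proper convex lsc functional on a real Hausdorff locally
convex space, finite and continuous at some point of the affine constraint set
`Γ = {e : e'_k e = α_k, k = 0,…,n}`, and `ē ∈ Γ` attains the finite infimum of `Φ` over
`Γ`, then there are multipliers `λ̄₀, …, λ̄ₙ ∈ ℝ` with
`Φ ē + Φ*(∑ λ̄_k e'_k) = ∑ λ̄_k α_k`, i.e. `ē ∈ ∂Φ*(∑ λ̄_k e'_k) = B_Φ(∑ λ̄_k e'_k)`. -/
theorem minimizer_in_banachic_kernel
    {E : Type*} [AddCommGroup E] [Module ℝ E] [TopologicalSpace E]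
    [IsTopologicalAddGroup E] [ContinuousSMul ℝ E] [LocallyConvexSpace ℝ E] [T2Space E]
    (Φ : E → EReal)
    (hne_bot : ∀ e : E, Φ e ≠ ⊥)
    (hproper : ∃ e : E, Φ e ≠ ⊤)
    (hconv : ∀ x y : E, ∀ a b : ℝ, 0 ≤ a → 0 ≤ b → a + b = 1 →
      Φ (a • x + b • y) ≤ (a : EReal) * Φ x + (b : EReal) * Φ y)
    (hlsc : LowerSemicontinuous Φ)
    (n : ℕ) (e' : Fin (n + 1) → (E →L[ℝ] ℝ)) (α : Fin (n + 1) → ℝ)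
    (Γ : Set E) (hΓ : Γ = {e : E | ∀ k : Fin (n + 1), e' k e = α k})
    (hcont : ∃ e₀ ∈ Γ, Φ e₀ ≠ ⊤ ∧ ContinuousAt Φ e₀)
    (ebar : E) (hebar : ebar ∈ Γ)
    (hfin : Φ ebar ≠ ⊤)
    (hmin : Φ ebar = ⨅ e ∈ Γ, Φ e) :
    ∃ lam : Fin (n + 1) → ℝ,
      Φ ebar + fenchelConj Φ (∑ k, lam k • e' k) =
        ((∑ k, lam k * α k : ℝ) : EReal) := by
  classical
  obtain ⟨e₀, he₀Γ, he₀fin, he₀cont⟩ := hcont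
  set m : ℝ := (Φ ebar).toReal with hm_def
  have hm : ((m : ℝ) : EReal) = Φ ebar := EReal.coe_toReal hfin (hne_bot ebar)
  set p₀ : ℝ := (Φ e₀).toReal with hp₀_def
  have hp₀ : ((p₀ : ℝ) : EReal) = Φ e₀ := EReal.coe_toReal he₀fin (hne_bot e₀)
  have hminΓ : ∀ e ∈ Γ, Φ ebar ≤ Φ e := by
    intro e he
    rw [hmin]
    exact iInf₂_le e he
  have hebarα : ∀ k, e' k ebar = α k := by rw [hΓ] at hebar; exact hebar
  have hΓconv : Convex ℝ Γ := by
    rw [hΓ]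
    intro x hx y hy a b ha hb hab
    intro k
    simp only [Set.mem_setOf_eq] at hx hy
    simp only [map_add, map_smul, hx k, hy k, smul_eq_mul]
    rw [← add_mul, hab, one_mul]
  set A : Set (E × ℝ) := {p : E × ℝ | Φ p.1 < ((p.2 : ℝ) : EReal)} with hA_def
  have hAconv : Convex ℝ A := by
    rintro ⟨x, s⟩ hx ⟨y, t⟩ hy a b ha hb hab
    simp only [hA_def, Set.mem_setOf_eq] at hx hy
    have heq : a • ((x, s) : E × ℝ) + b • ((y, t) : E × ℝ) = (a • x + b • y, a * s + b * t) := by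
      simp [Prod.smul_mk, Prod.mk_add_mk, smul_eq_mul]
    simp only [hA_def, Set.mem_setOf_eq, heq]
    have hxt : Φ x ≠ ⊤ := ne_top_of_lt hx
    have hyt : Φ y ≠ ⊤ := ne_top_of_lt hy
    set rx : ℝ := (Φ x).toReal with hrx_def
    set ry : ℝ := (Φ y).toReal with hry_def
    have hrx : ((rx : ℝ) : EReal) = Φ x := EReal.coe_toReal hxt (hne_bot x)
    have hry : ((ry : ℝ) : EReal) = Φ y := EReal.coe_toReal hyt (hne_bot y)
    have hrxs : rx < s := by rw [← EReal.coe_lt_coe_iff, hrx]; exact hx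
    have hryt : ry < t := by rw [← EReal.coe_lt_coe_iff, hry]; exact hy
    refine lt_of_le_of_lt (hconv x y a b ha hb hab) ?_
    rw [← hrx, ← hry, ← EReal.coe_mul, ← EReal.coe_mul, ← EReal.coe_add,
      EReal.coe_lt_coe_iff]
    rcases ha.lt_or_eq with hapos | haz
    · have h1 : a * rx < a * s := by exact mul_lt_mul_of_pos_left hrxs hapos
      have h2 : b * ry ≤ b * t := mul_le_mul_of_nonneg_left hryt.le hb
      linarith
    · have hb1 : b = 1 := by rw [← haz] at hab; linarith
      rw [← haz, hb1]
      simpa using hryt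
  have hx₀ : (e₀, p₀ + 1) ∈ interior A := by
    rw [mem_interior_iff_mem_nhds]
    have hU : Φ ⁻¹' (Set.Iio ((p₀ + 2⁻¹ : ℝ) : EReal)) ∈ nhds e₀ := by
      apply he₀cont.preimage_mem_nhds
      apply Iio_mem_nhds
      rw [← hp₀, EReal.coe_lt_coe_iff]
      linarith
    have hV : Set.Ioi (p₀ + 2⁻¹) ∈ nhds (p₀ + 1) := Ioi_mem_nhds (by linarith)
    refine Filter.mem_of_superset (prod_mem_nhds hU hV) ?_
    rintro ⟨e, t⟩ ⟨he, ht⟩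
    simp only [Set.mem_preimage, Set.mem_Iio] at he
    simp only [Set.mem_Ioi] at ht
    exact lt_trans he (EReal.coe_lt_coe_iff.2 ht)
  set B : Set (E × ℝ) := Γ ×ˢ Set.Iio m with hB_def
  have hBconv : Convex ℝ B := hΓconv.prod (convex_Iio m)
  have hdisj : Disjoint (interior A) B := by
    rw [Set.disjoint_left]
    rintro ⟨e, t⟩ hpA ⟨heΓ, htm⟩
    have h1 : ((e, t) : E × ℝ) ∈ A := interior_subset hpA
    simp only [hA_def, Set.mem_setOf_eq] at h1
    have h2 : (m : EReal) ≤ Φ e := by rw [hm]; exact hminΓ e heΓ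
    have h3 : m < t := EReal.coe_lt_coe_iff.1 (lt_of_le_of_lt h2 h1)
    exact absurd htm (not_lt.2 h3.le)
  obtain ⟨f, u, hfu, hub⟩ :=
    geometric_hahn_banach_open hAconv.interior isOpen_interior hBconv hdisj
  have hA_le : ∀ p ∈ A, f p ≤ u := by
    intro p hp
    have key : ∀ θ : ℝ, θ ∈ Set.Ioo (0 : ℝ) 1 →
        θ * f (e₀, p₀ + 1) + (1 - θ) * f p < u := by
      intro θ hθ
      have hmem : θ • ((e₀, p₀ + 1) : E × ℝ) + (1 - θ) • p ∈ interior A :=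
        hAconv.combo_interior_self_mem_interior hx₀ hp hθ.1 (by linarith [hθ.2]) (by ring)
      have h := hfu _ hmem
      rwa [map_add, map_smul, map_smul, smul_eq_mul, smul_eq_mul] at h
    have htend : Filter.Tendsto (fun θ : ℝ => θ * f (e₀, p₀ + 1) + (1 - θ) * f p)
        (nhdsWithin 0 (Set.Ioi 0)) (nhds (f p)) := by
      have hc : Continuous fun θ : ℝ => θ * f (e₀, p₀ + 1) + (1 - θ) * f p :=
        (continuous_id.mul continuous_const).add
          ((continuous_const.sub continuous_id).mul continuous_const)
      have h := hc.tendsto 0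
      simp only [zero_mul, sub_zero, one_mul, zero_add] at h
      exact h.mono_left nhdsWithin_le_nhds
    refine le_of_tendsto htend ?_
    filter_upwards [Ioo_mem_nhdsGT_of_mem (Set.mem_Ico.2 ⟨le_refl (0 : ℝ), zero_lt_one⟩)]
      with θ hθ
    exact (key θ hθ).le
  set φ : E →L[ℝ] ℝ := f.comp (ContinuousLinearMap.inl ℝ E ℝ) with hφ_def
  set c : ℝ := f (0, 1) with hc_def
  have hsplit : ∀ (e : E) (t : ℝ), f (e, t) = φ e + t * c := by
    intro e t
    have heq : ((e, t) : E × ℝ) = (e, 0) + t • ((0 : E), (1 : ℝ)) := by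
      simp [Prod.smul_mk, Prod.mk_add_mk]
    rw [heq, map_add, map_smul, smul_eq_mul]
    rfl
  have key1 : ∀ (e : E) (t : ℝ), Φ e < (t : EReal) → φ e + t * c ≤ u := by
    intro e t ht
    have h := hA_le (e, t) ht
    rwa [hsplit] at h
  have key2 : ∀ e ∈ Γ, ∀ t : ℝ, t < m → u ≤ φ e + t * c := by
    intro e he t ht
    have h := hub (e, t) ⟨he, ht⟩
    rwa [hsplit] at h
  have hstrict : φ e₀ + (p₀ + 1) * c < u := by
    have h := hfu _ hx₀
    rwa [hsplit] at h
  have hcneg : c < 0 := by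
    rcases lt_trichotomy c 0 with h | h | h
    · exact h
    · exfalso
      have h1 := key2 e₀ he₀Γ (m - 1) (by linarith)
      rw [h, mul_zero, add_zero] at h1 hstrict
      linarith
    · exfalso
      have h1 := key2 ebar hebar (min (m - 1) ((u - 1 - φ ebar) / c))
        (lt_of_le_of_lt (min_le_left _ _) (by linarith))
      have h2 : min (m - 1) ((u - 1 - φ ebar) / c) * c ≤ ((u - 1 - φ ebar) / c) * c :=
        mul_le_mul_of_nonneg_right (min_le_right _ _) h.le
      rw [div_mul_cancel₀ _ (ne_of_gt h)] at h2
      linarith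
  have key1' : ∀ (e : E) (r : ℝ), Φ e = (r : EReal) → φ e + r * c ≤ u := by
    intro e r hr
    have htend : Filter.Tendsto (fun t : ℝ => φ e + t * c)
        (nhdsWithin r (Set.Ioi r)) (nhds (φ e + r * c)) := by
      have hc' : Continuous fun t : ℝ => φ e + t * c :=
        continuous_const.add (continuous_id.mul continuous_const)
      exact (hc'.tendsto r).mono_left nhdsWithin_le_nhds
    refine le_of_tendsto htend ?_
    filter_upwards [self_mem_nhdsWithin] with t ht
    exact key1 e t (by rw [hr]; exact_mod_cast ht)
  have key2' : u ≤ φ ebar + m * c := by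
    have htend : Filter.Tendsto (fun t : ℝ => φ ebar + t * c)
        (nhdsWithin m (Set.Iio m)) (nhds (φ ebar + m * c)) := by
      have hc' : Continuous fun t : ℝ => φ ebar + t * c :=
        continuous_const.add (continuous_id.mul continuous_const)
      exact (hc'.tendsto m).mono_left nhdsWithin_le_nhds
    refine ge_of_tendsto htend ?_
    filter_upwards [self_mem_nhdsWithin] with t ht
    exact key2 ebar hebar t ht
  have hker : ∀ x : E, (∀ k, e' k x = 0) → φ x = 0 := by
    intro x hx
    by_contra hne
    have hmem : ∀ s : ℝ, ebar + s • x ∈ Γ := by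
      intro s
      rw [hΓ]
      intro k
      simp [map_add, map_smul, hx k, hebarα k]
    have hb : ∀ s : ℝ, u ≤ φ ebar + s * φ x + (m - 1) * c := by
      intro s
      have h := key2 _ (hmem s) (m - 1) (by linarith)
      rw [map_add, map_smul, smul_eq_mul] at h
      linarith
    have h := hb ((u - 1 - φ ebar - (m - 1) * c) / φ x)
    rw [div_mul_cancel₀ _ hne] at h
    linarith
  have hspan : (φ : E →ₗ[ℝ] ℝ) ∈
      Submodule.span ℝ (Set.range fun k => ((e' k : E →ₗ[ℝ] ℝ))) := by
    apply mem_span_of_iInf_ker_le_ker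
    intro x hx
    simp only [Submodule.mem_iInf, LinearMap.mem_ker, ContinuousLinearMap.coe_coe] at hx ⊢
    exact hker x hx
  obtain ⟨μ, hμ⟩ := (Submodule.mem_span_range_iff_exists_fun ℝ).1 hspan
  have hφsum : ∀ x : E, ∑ k, μ k * e' k x = φ x := by
    intro x
    have h := LinearMap.congr_fun hμ x
    simpa [LinearMap.sum_apply, LinearMap.smul_apply, smul_eq_mul] using h
  set d : ℝ := -c with hd_def
  have hd : 0 < d := by simp [hd_def]; linarith
  refine ⟨fun k => μ k / d, ?_⟩
  show Φ ebar + fenchelConj Φ (∑ k, (μ k / d) • e' k) = ((∑ k, (μ k / d) * α k : ℝ) : EReal)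
  set g : E →L[ℝ] ℝ := ∑ k, (μ k / d) • e' k with hg_def
  have hg : ∀ x : E, g x = φ x / d := by
    intro x
    rw [hg_def]
    simp only [ContinuousLinearMap.coe_sum', Finset.sum_apply,
      ContinuousLinearMap.coe_smul', Pi.smul_apply, smul_eq_mul]
    rw [← hφsum x, Finset.sum_div]
    exact Finset.sum_congr rfl fun k _ => by ring
  have hsumα : (∑ k, (μ k / d) * α k) = g ebar := by
    rw [hg_def]
    simp only [ContinuousLinearMap.coe_sum', Finset.sum_apply,
      ContinuousLinearMap.coe_smul', Pi.smul_apply, smul_eq_mul]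
    exact Finset.sum_congr rfl fun k _ => by rw [hebarα k]
  have hmc : m * c = -(m * d) := by rw [hd_def]; ring
  have hgeb : g ebar * d = φ ebar := by
    rw [hg ebar, div_mul_cancel₀ _ (ne_of_gt hd)]
  have hub2 : u / d ≤ g ebar - m := by
    rw [div_le_iff₀ hd]
    have h : (g ebar - m) * d = φ ebar - m * d := by rw [sub_mul, hgeb]
    linarith [key2']
  have hge : ∀ (e : E) (r : ℝ), Φ e = (r : EReal) → g e - r ≤ u / d := by
    intro e r hr
    rw [le_div_iff₀ hd]
    have hged : g e * d = φ e := by rw [hg e, div_mul_cancel₀ _ (ne_of_gt hd)]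
    have h : (g e - r) * d = φ e - r * d := by rw [sub_mul, hged]
    have hrc : r * c = -(r * d) := by rw [hd_def]; ring
    linarith [key1' e r hr]
  have hconj : fenchelConj Φ g = ((g ebar - m : ℝ) : EReal) := by
    apply le_antisymm
    · apply iSup_le
      intro e
      by_cases he : Φ e = ⊤
      · rw [he, EReal.sub_top]
        exact bot_le
      · set r : ℝ := (Φ e).toReal with hr_def
        have hr : Φ e = (r : EReal) := (EReal.coe_toReal he (hne_bot e)).symm
        rw [hr, ← EReal.coe_sub, EReal.coe_le_coe_iff]
        linarith [hge e r hr, hub2]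
    · have h : ((g ebar - m : ℝ) : EReal) = (g ebar : EReal) - Φ ebar := by
        rw [← hm, ← EReal.coe_sub]
      rw [h]
      exact le_iSup (fun e => ((g e : EReal) - Φ e)) ebar
  rw [hconj, ← hm, ← EReal.coe_add, EReal.coe_eq_coe_iff, hsumα]
  ring
end

section
/- Let m ≥ 2 be an integer, h > 0 and t ∈ ℝ, and let B(s) = Σ_{l=0}^{m} (−1)^{m−l} (m choose l) ((t + l·h − s)₊)^{m−1}, where u₊ = max(u,0). Then B(s) ≥ 0 for every s ∈ ℝ. -/
open Filter Function

/-- The truncated power function. -/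
noncomputable def truncPow (n : ℕ) : ℝ → ℝ := fun u => max u 0 ^ n

lemma truncPow_cont (n : ℕ) : Continuous (truncPow n) := by
  unfold truncPow; fun_prop

lemma truncPow_nonneg (n : ℕ) (u : ℝ) : 0 ≤ truncPow n u :=
  pow_nonneg (le_max_right _ _) n

lemma hasDerivAt_truncPow (n : ℕ) (hn : 1 ≤ n) (u : ℝ) :
    HasDerivAt (truncPow (n + 1)) ((n + 1 : ℝ) * truncPow n u) u := by
  rcases lt_trichotomy u 0 with hu | hu | hu
  · -- locally zero
    have h0 : truncPow n u = 0 := by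
      simp [truncPow, max_eq_right hu.le, zero_pow (by omega : n ≠ 0)]
    rw [h0, mul_zero]
    have : HasDerivAt (fun _ : ℝ => (0 : ℝ)) 0 u := hasDerivAt_const u 0
    refine this.congr_of_eventuallyEq ?_
    filter_upwards [Iio_mem_nhds hu] with v hv
    simp [truncPow, max_eq_right (le_of_lt (Set.mem_Iio.mp hv)), zero_pow (by omega : n + 1 ≠ 0)]
  · -- u = 0 : derivative is 0, via slope
    subst hu
    have h0 : truncPow n 0 = 0 := by
      simp [truncPow, zero_pow (by omega : n ≠ 0)]
    rw [h0, mul_zero]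
    rw [hasDerivAt_iff_tendsto_slope]
    have hb : Tendsto (fun v : ℝ => |v| ^ n) (nhdsWithin (0:ℝ) {(0:ℝ)}ᶜ) (nhds 0) := by
      have : Tendsto (fun v : ℝ => |v| ^ n) (nhds (0:ℝ)) (nhds (|0| ^ n)) :=
        ((continuous_abs.pow n).tendsto 0)
      simpa [zero_pow (by omega : n ≠ 0)] using this.mono_left nhdsWithin_le_nhds
    refine squeeze_zero_norm (fun v => ?_) hb
    by_cases hv : v = 0
    · simp [hv, slope, h0, truncPow, zero_pow (by omega : n + 1 ≠ 0)]
    · have : slope (truncPow (n + 1)) 0 v = truncPow (n + 1) v / v := by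
        simp [slope, h0, truncPow, zero_pow (by omega : n + 1 ≠ 0)]
        ring
      rw [this, norm_div]
      rw [div_le_iff₀ (norm_pos_iff.mpr hv)]
      have h1 : ‖truncPow (n + 1) v‖ = max v 0 ^ (n + 1) := by
        simp [truncPow, abs_of_nonneg (truncPow_nonneg (n+1) v)]
      rw [h1]
      have h2 : max v 0 ≤ |v| := by
        rcases le_total v 0 with hv' | hv'
        · simp [max_eq_right hv', abs_nonneg]
        · simp [max_eq_left hv', le_abs_self]
      calc max v 0 ^ (n + 1) ≤ |v| ^ (n + 1) :=
            pow_le_pow_left₀ (le_max_right _ _) h2 _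
        _ = |v| ^ n * ‖v‖ := by rw [pow_succ]; simp
  · -- locally v ^ (n+1)
    have h0 : truncPow n u = u ^ n := by simp [truncPow, max_eq_left hu.le]
    rw [h0]
    have hp : HasDerivAt (fun v : ℝ => v ^ (n + 1)) ((n + 1 : ℝ) * u ^ n) u := by
      simpa using hasDerivAt_pow (n + 1) u
    refine hp.congr_of_eventuallyEq ?_
    filter_upwards [Ioi_mem_nhds hu] with v hv
    simp [truncPow, max_eq_left (le_of_lt (Set.mem_Ioi.mp hv))]

lemma fwdDiff_truncPow (h : ℝ) (n : ℕ) (hn : 1 ≤ n) (x : ℝ) :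
    fwdDiff h (truncPow (n + 1)) x
      = ∫ u in (0:ℝ)..h, ((n + 1 : ℝ) * truncPow n (x + u)) := by
  have hint : ∀ a b : ℝ, IntervalIntegrable (fun u => (n + 1 : ℝ) * truncPow n u)
      MeasureTheory.volume a b :=
    fun a b => (continuous_const.mul (truncPow_cont n)).intervalIntegrable a b
  have hftc : ∫ u in x..(x + h), ((n + 1 : ℝ) * truncPow n u)
      = truncPow (n + 1) (x + h) - truncPow (n + 1) x :=
    intervalIntegral.integral_eq_sub_of_hasDerivAt
      (fun u _ => hasDerivAt_truncPow n hn u) (hint x (x + h))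
  have hcomp : (∫ u in (0:ℝ)..h, ((n + 1 : ℝ) * truncPow n (x + u)))
      = ∫ u in (x + 0)..(x + h), ((n + 1 : ℝ) * truncPow n u) :=
    intervalIntegral.integral_comp_add_left (fun u => (n + 1 : ℝ) * truncPow n u) x
  rw [hcomp, add_zero, hftc, fwdDiff]

/-- Key nonnegativity: the (n+1)-st forward difference of the truncated power of
degree n is nonnegative. -/
lemma fwdDiff_iter_truncPow_nonneg (h : ℝ) (hh : 0 < h) (n : ℕ) (hn : 1 ≤ n) :
    ∀ x : ℝ, 0 ≤ (fwdDiff h)^[n + 1] (truncPow n) x := by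
  induction n, hn using Nat.le_induction with
  | base =>
    intro x
    have : (fwdDiff h)^[2] (truncPow 1) x
        = truncPow 1 (x + h + h) - truncPow 1 (x + h)
          - (truncPow 1 (x + h) - truncPow 1 x) := by
      simp [show (2:ℕ) = 1 + 1 from rfl, Function.iterate_succ_apply',
        Function.iterate_one, fwdDiff]
    rw [this]
    simp only [truncPow, pow_one]
    rcases le_total (x + h) 0 with hx | hx
    · have h1 : max (x + h) 0 = 0 := max_eq_right hx
      have h2 : (0:ℝ) ≤ max (x + h + h) 0 := le_max_right _ _
      have h3 : (0:ℝ) ≤ max x 0 := le_max_right _ _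
      linarith
    · have h1 : max (x + h) 0 = x + h := max_eq_left hx
      have h2 : x + h + h ≤ max (x + h + h) 0 := le_max_left _ _
      have h3 : x ≤ max x 0 := le_max_left _ _
      linarith
  | succ n hn ih =>
    intro x
    have key : (fwdDiff h)^[n + 1 + 1] (truncPow (n + 1)) x
        = ∫ u in (0:ℝ)..h,
            ((n + 1 : ℝ) * (fwdDiff h)^[n + 1] (truncPow n) (x + u)) := by
      rw [Function.iterate_succ_apply, fwdDiff_iter_eq_sum_shift]
      have hterm : ∀ k : ℕ,
          ((-1 : ℤ) ^ (n + 1 - k) * (n + 1).choose k) • fwdDiff h (truncPow (n + 1)) (x + k • h)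
            = ∫ u in (0:ℝ)..h,
                (((-1 : ℝ) ^ (n + 1 - k) * (n + 1).choose k)
                  * ((n + 1 : ℝ) * truncPow n (x + k • h + u))) := by
        intro k
        rw [fwdDiff_truncPow h n hn (x + k • h), zsmul_eq_mul,
          ← intervalIntegral.integral_const_mul]
        refine intervalIntegral.integral_congr fun u _ => ?_
        push_cast
        ring
      rw [Finset.sum_congr rfl fun k _ => hterm k]
      rw [← intervalIntegral.integral_finset_sum]
      · refine intervalIntegral.integral_congr fun u _ => ?_
        rw [fwdDiff_iter_eq_sum_shift, Finset.mul_sum]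
        refine Finset.sum_congr rfl fun k _ => ?_
        rw [zsmul_eq_mul, show x + k • h + u = x + u + k • h from add_right_comm x (k • h) u]
        push_cast
        ring
      · intro k _
        apply Continuous.intervalIntegrable
        have : Continuous fun u : ℝ => truncPow n (x + k • h + u) :=
          (truncPow_cont n).comp (continuous_const.add continuous_id)
        fun_prop
    rw [key]
    apply intervalIntegral.integral_nonneg hh.le
    intro u _
    have h1 : (0:ℝ) ≤ (n + 1 : ℝ) := by positivity
    exact mul_nonneg h1 (ih (x + u))

lemma fwdDiff_iter_comp_add' (h c : ℝ) (f : ℝ → ℝ) (n : ℕ) :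
    ∀ x : ℝ, (fwdDiff h)^[n] (fun y => f (y + c)) x = (fwdDiff h)^[n] f (x + c) := by
  induction n generalizing f with
  | zero => intro x; simp
  | succ n ih =>
    intro x
    rw [Function.iterate_succ_apply, Function.iterate_succ_apply]
    have : fwdDiff h (fun y => f (y + c)) = fun y => fwdDiff h f (y + c) := by
      funext y; simp [fwdDiff, add_right_comm]
    rw [this, ih (fwdDiff h f) x]

/-- the (unnormalized) B-spline with equally spaced knots
`t, t+h, …, t+m·h`, `B(s) = ∑_{l=0}^{m} (−1)^{m−l} C(m,l) ((t + l·h − s)₊)^{m−1}`,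
is nonnegative on all of `ℝ`. -/
theorem bspline_nonneg
    (m : ℕ) (hm : 2 ≤ m) (h : ℝ) (hh : 0 < h) (t : ℝ)
    (B : ℝ → ℝ)
    (hB : ∀ s : ℝ, B s = ∑ l ∈ Finset.range (m + 1),
      (-1 : ℝ) ^ (m - l) * (m.choose l) * (max (t + l * h - s) 0) ^ (m - 1)) :
    ∀ s : ℝ, 0 ≤ B s := by
  intro s
  rw [hB s]
  have hkey : (∑ l ∈ Finset.range (m + 1),
      (-1 : ℝ) ^ (m - l) * (m.choose l) * (max (t + l * h - s) 0) ^ (m - 1))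
      = (fwdDiff h)^[m] (fun y : ℝ => truncPow (m - 1) (y + (-s))) t := by
    rw [fwdDiff_iter_eq_sum_shift]
    refine Finset.sum_congr rfl fun l _ => ?_
    rw [zsmul_eq_mul]
    have harg : t + l • h + -s = t + l * h - s := by
      rw [nsmul_eq_mul]; ring
    rw [harg]
    push_cast
    simp [truncPow]
  rw [hkey, fwdDiff_iter_comp_add']
  have hm1 : 1 ≤ m - 1 := by omega
  have := fwdDiff_iter_truncPow_nonneg h hh (m - 1) hm1 (t + (-s))
  rwa [show m - 1 + 1 = m by omega] at this
end

section
/- (Peano kernel property of the B-spline.) Let m ≥ 2 be an integer, h > 0 and t ∈ ℝ, and let B(s) = Σ_{l=0}^{m} (−1)^{m−l} (m choose l) ((t + l·h − s)₊)^{m−1}, where u₊ = max(u,0). Then for every m times continuously differentiable function y : ℝ → ℝ, ∫_ℝ y^{(m)}(s) · B(s)/(m−1)! ds = Σ_{l=0}^{m} (−1)^{m−l} (m choose l) y(t + l·h); that is, integrating y^{(m)} against the B-spline kernel produces the m-th order finite difference D_h^m y(t) of y at the knots. -/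
open Finset MeasureTheory Set intervalIntegral
open scoped Nat

/-- For a `ContDiff` function, iterated derivatives within a unique-diff set agree with
the global iterated derivatives. -/
private lemma idw_eq_id {f : ℝ → ℝ} {n : ℕ} (hf : ContDiff ℝ ((n : ℕ) : ℕ∞) f) {s : Set ℝ}
    (hs : UniqueDiffOn ℝ s) {x : ℝ} (hx : x ∈ s) {k : ℕ} (hk : k ≤ n) :
    iteratedDerivWithin k f s x = iteratedDeriv k f x := by
  have H : HasFTaylorSeriesUpToOn ((n : ℕ) : ℕ∞) f (ftaylorSeries ℝ f) s :=
    (contDiff_iff_ftaylorSeries.mp hf).hasFTaylorSeriesUpToOn s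
  have h2 := H.eq_iteratedFDerivWithin_of_uniqueDiffOn (m := k) (by exact_mod_cast hk) hs hx
  rw [iteratedDerivWithin_eq_iteratedFDerivWithin, iteratedDeriv_eq_iteratedFDeriv, ← h2]
  rfl

/-- Iterated forward differences annihilate monomials of lower degree. -/
private lemma fwdDiff_iter_monomial (h c : ℝ) :
    ∀ k m : ℕ, k < m → (fwdDiff h)^[m] (fun x : ℝ => (x - c) ^ k) = fun _ => 0 := by
  intro k
  induction k using Nat.strong_induction_on with
  | _ k ih =>
    intro m hk
    obtain ⟨m', rfl⟩ : ∃ m', m = m' + 1 := ⟨m - 1, by omega⟩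
    rw [Function.iterate_succ_apply]
    have step : fwdDiff h (fun x : ℝ => (x - c) ^ k)
        = ∑ j ∈ Finset.range k, (h ^ (k - j) * (k.choose j : ℝ)) • (fun x : ℝ => (x - c) ^ j) := by
      funext x
      simp only [fwdDiff, Finset.sum_apply, Pi.smul_apply, smul_eq_mul]
      have hx : x + h - c = (x - c) + h := by ring
      rw [hx, add_pow, Finset.sum_range_succ]
      simp only [Nat.choose_self, Nat.sub_self, pow_zero, Nat.cast_one, mul_one, one_mul]
      rw [add_sub_cancel_right]
      exact Finset.sum_congr rfl fun j hj => by ring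
    rw [step, fwdDiff_iter_finset_sum]
    funext x
    rw [Finset.sum_apply]
    refine Finset.sum_eq_zero fun j hj => ?_
    have hjk := Finset.mem_range.mp hj
    rw [fwdDiff_iter_const_smul, ih j hjk m' (by omega)]
    simp

/-- The alternating binomial sum annihilates polynomials of degree `< m`. -/
private lemma alt_sum_shift (m : ℕ) (h t c : ℝ) {k : ℕ} (hk : k < m) :
    ∑ l ∈ Finset.range (m + 1),
      (-1 : ℝ) ^ (m - l) * (m.choose l) * (t + l * h - c) ^ k = 0 := by
  have H := fwdDiff_iter_eq_sum_shift (h := h) (fun x : ℝ => (x - c) ^ k) m t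
  rw [fwdDiff_iter_monomial h c k m hk] at H
  simp only [zsmul_eq_mul, nsmul_eq_mul, Int.cast_mul, Int.cast_pow, Int.cast_neg,
    Int.cast_one, Int.cast_natCast] at H
  exact H.symm

/-- Taylor's theorem with integral remainder. -/
private lemma taylor_integral_remainder' {f : ℝ → ℝ} {n : ℕ}
    (hf : ContDiff ℝ (((n + 1 : ℕ)) : ℕ∞) f) {a b : ℝ} (hab : a < b) :
    f b = (∑ k ∈ Finset.range (n + 1), ((k ! : ℝ)⁻¹ * (b - a) ^ k) * iteratedDeriv k f a)
        + ∫ s in a..b, ((n ! : ℝ)⁻¹ * (b - s) ^ n) * iteratedDeriv (n + 1) f s := by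
  have hab' : a ≤ b := hab.le
  set g : ℝ → ℝ := fun x => taylorWithinEval f n (Set.Icc a b) x b with hg
  have hfn : ContDiffOn ℝ n f (Set.Icc a b) :=
    (hf.of_le (by exact_mod_cast Nat.le_succ n)).contDiffOn
  have hunique : UniqueDiffOn ℝ (Set.Icc a b) := uniqueDiffOn_Icc hab
  have hd : ∀ x ∈ Set.Ioo a b, HasDerivAt g
      (((n ! : ℝ)⁻¹ * (b - x) ^ n) * iteratedDeriv (n + 1) f x) x := by
    intro x hx
    have hmem : x ∈ Set.Icc a b := Set.Ioo_subset_Icc_self hx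
    have h1 : DifferentiableOn ℝ (iteratedDerivWithin n f (Set.Icc a b)) (Set.Ioo a b) := by
      have hdiff : Differentiable ℝ (iteratedDeriv n f) :=
        hf.differentiable_iteratedDeriv n (by exact_mod_cast Nat.lt_succ_self n)
      exact hdiff.differentiableOn.congr fun y hy =>
        idw_eq_id hf hunique (Set.Ioo_subset_Icc_self hy) (Nat.le_succ n)
    have h2 := taylorWithinEval_hasDerivAt_Ioo b hab hx hfn h1
    rw [idw_eq_id hf hunique hmem le_rfl, smul_eq_mul] at h2
    exact h2
  have hcont : ContinuousOn g (Set.Icc a b) := continuousOn_taylorWithinEval hunique hfn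
  have hint : IntervalIntegrable
      (fun s => ((n ! : ℝ)⁻¹ * (b - s) ^ n) * iteratedDeriv (n + 1) f s) volume a b := by
    apply Continuous.intervalIntegrable
    exact (continuous_const.mul ((continuous_const.sub continuous_id).pow n)).mul
      (hf.continuous_iteratedDeriv (n + 1) (by exact_mod_cast le_rfl))
  have key := intervalIntegral.integral_eq_sub_of_hasDeriv_right_of_le hab' hcont
      (fun x hx => (hd x hx).hasDerivWithinAt) hint
  have hgb : g b = f b := taylorWithinEval_self f n _ b
  have hga : g a = ∑ k ∈ Finset.range (n + 1),
      ((k ! : ℝ)⁻¹ * (b - a) ^ k) * iteratedDeriv k f a := by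
    rw [hg]
    simp only
    rw [taylor_within_apply]
    refine Finset.sum_congr rfl fun k hk => ?_
    rw [smul_eq_mul, idw_eq_id hf hunique (Set.left_mem_Icc.mpr hab')
      (le_trans (Nat.le_of_lt_succ (Finset.mem_range.mp hk)) (Nat.le_succ n))]
  rw [key, hgb, hga]
  ring

/-- Peano kernel property of the B-spline: for the unnormalized B-spline
`B(s) = ∑_{l=0}^{m} (−1)^{m−l} C(m,l) ((t + l·h − s)₊)^{m−1}` with equally spaced knots
`t, t+h, …, t+m·h` and any `m` times continuously differentiable `y : ℝ → ℝ`,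
`∫ y⁽ᵐ⁾(s) B(s)/(m−1)! ds = ∑_{l=0}^{m} (−1)^{m−l} C(m,l) y(t + l·h)`, the `m`-th order
finite difference of `y` at the knots. -/
theorem bspline_peano_kernel
    (m : ℕ) (hm : 2 ≤ m) (h : ℝ) (hh : 0 < h) (t : ℝ)
    (B : ℝ → ℝ)
    (hB : ∀ s : ℝ, B s = ∑ l ∈ Finset.range (m + 1),
      (-1 : ℝ) ^ (m - l) * (m.choose l) * (max (t + l * h - s) 0) ^ (m - 1)) :
    ∀ y : ℝ → ℝ, ContDiff ℝ m y →
      ∫ s : ℝ, iteratedDeriv m y s * B s / (Nat.factorial (m - 1)) =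
        ∑ l ∈ Finset.range (m + 1),
          (-1 : ℝ) ^ (m - l) * (m.choose l) * y (t + l * h) := by
  intro y hy
  obtain ⟨n, rfl⟩ : ∃ n, m = n + 2 := ⟨m - 2, by omega⟩
  have hy' : ContDiff ℝ (((n + 2 : ℕ)) : ℕ∞) y := by exact_mod_cast hy
  have hsub : n + 2 - 1 = n + 1 := by omega
  set g : ℝ → ℝ := iteratedDeriv (n + 2) y with hgdef
  have hgc : Continuous g := hy.continuous_iteratedDeriv (n + 2) (by exact_mod_cast le_rfl)
  set c : ℕ → ℝ := fun l => (-1 : ℝ) ^ (n + 2 - l) * ((n + 2).choose l : ℝ) with hc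
  set b0 : ℝ := t + ((n + 2 : ℕ) : ℝ) * h with hb0
  set F : ℕ → ℝ → ℝ := fun l s =>
    c l * ((((n + 1)! : ℝ)⁻¹ * (max (t + (l : ℝ) * h - s) 0) ^ (n + 1)) * g s) with hF
  have hFcont : ∀ l, Continuous (F l) := by
    intro l
    apply continuous_const.mul
    exact (continuous_const.mul
      (((continuous_const.sub continuous_id).max continuous_const).pow (n + 1))).mul hgc
  set T : ℕ → ℝ := fun l => ∑ k ∈ Finset.range (n + 2),
    ((k ! : ℝ)⁻¹ * ((l : ℝ) * h) ^ k) * iteratedDeriv k y t with hT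
  set R : ℕ → ℝ := fun l =>
    ∫ s in t..(t + (l : ℝ) * h), (((n + 1)! : ℝ)⁻¹ * (t + (l : ℝ) * h - s) ^ (n + 1)) * g s
    with hR
  have hdecomp : ∀ l : ℕ, y (t + (l : ℝ) * h) = T l + R l := by
    intro l
    rcases Nat.eq_zero_or_pos l with hl | hl
    · subst hl
      simp only [hT, hR, Nat.cast_zero, zero_mul, add_zero, intervalIntegral.integral_same]
      rw [Finset.sum_eq_single 0 (fun k _ hk => by rw [zero_pow hk]; ring) (by simp)]
      simp
    · have hlt : t < t + (l : ℝ) * h := by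
        have h1 : (0 : ℝ) < (l : ℝ) * h := mul_pos (by exact_mod_cast hl) hh
        linarith
      have hy'' : ContDiff ℝ (((n + 1 + 1 : ℕ)) : ℕ∞) y := by
        rw [(by omega : n + 1 + 1 = n + 2)]; exact hy'
      have htay := taylor_integral_remainder' hy'' hlt
      rw [(by omega : n + 1 + 1 = n + 2)] at htay
      rw [htay]
      simp only [hT, hR, hgdef]
      congr 1
      refine Finset.sum_congr rfl fun k _ => ?_
      rw [add_sub_cancel_left]
  have key_k : ∀ k : ℕ, k < n + 2 →
      ∑ l ∈ Finset.range (n + 3), c l * ((l : ℝ) * h) ^ k = 0 := by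
    intro k hk
    have H := alt_sum_shift (n + 2) h t t (k := k) hk
    simp only [add_sub_cancel_left] at H
    simp only [hc]
    exact H
  have hTpart : (∑ l ∈ Finset.range (n + 3), c l * T l) = 0 := by
    have hrw : ∀ l, c l * T l = ∑ k ∈ Finset.range (n + 2),
        ((k ! : ℝ)⁻¹ * iteratedDeriv k y t) * (c l * ((l : ℝ) * h) ^ k) := by
      intro l
      simp only [hT]
      rw [Finset.mul_sum]
      exact Finset.sum_congr rfl fun k _ => by ring
    simp_rw [hrw]
    rw [Finset.sum_comm]
    refine Finset.sum_eq_zero fun k hk => ?_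
    rw [← Finset.mul_sum, key_k k (Finset.mem_range.mp hk), mul_zero]
  have hRpart : ∀ l ∈ Finset.range (n + 3), c l * R l = ∫ s in t..b0, F l s := by
    intro l hl
    have hl' : l ≤ n + 2 := Nat.lt_succ_iff.mp (Finset.mem_range.mp hl)
    have hbl : t + (l : ℝ) * h ≤ b0 := by
      have h1 : (l : ℝ) * h ≤ ((n + 2 : ℕ) : ℝ) * h :=
        mul_le_mul_of_nonneg_right (by exact_mod_cast hl') hh.le
      rw [hb0]; linarith
    have htbl : t ≤ t + (l : ℝ) * h := by
      have h1 : (0 : ℝ) ≤ (l : ℝ) * h := mul_nonneg (Nat.cast_nonneg l) hh.le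
      linarith
    have hsplit : (∫ s in t..b0, F l s)
        = (∫ s in t..(t + (l : ℝ) * h), F l s) + ∫ s in (t + (l : ℝ) * h)..b0, F l s :=
      (intervalIntegral.integral_add_adjacent_intervals
        ((hFcont l).intervalIntegrable _ _) ((hFcont l).intervalIntegrable _ _)).symm
    have hzero : (∫ s in (t + (l : ℝ) * h)..b0, F l s) = 0 := by
      have heq : Set.EqOn (F l) (fun _ => (0 : ℝ)) (Set.uIcc (t + (l : ℝ) * h) b0) := by
        intro s hs
        rw [Set.uIcc_of_le hbl] at hs
        have h1 : t + (l : ℝ) * h - s ≤ 0 := by linarith [hs.1]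
        simp only [hF]
        rw [max_eq_right h1, zero_pow (by omega : n + 1 ≠ 0)]
        simp
      rw [intervalIntegral.integral_congr heq, intervalIntegral.integral_zero]
    have hfirst : (∫ s in t..(t + (l : ℝ) * h), F l s) = c l * R l := by
      have heq : Set.EqOn (F l)
          (fun s => c l * ((((n + 1)! : ℝ)⁻¹ * (t + (l : ℝ) * h - s) ^ (n + 1)) * g s))
          (Set.uIcc t (t + (l : ℝ) * h)) := by
        intro s hs
        rw [Set.uIcc_of_le htbl] at hs
        have h1 : 0 ≤ t + (l : ℝ) * h - s := by linarith [hs.2]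
        simp only [hF]
        rw [max_eq_left h1]
      rw [intervalIntegral.integral_congr heq, intervalIntegral.integral_const_mul]
    rw [hsplit, hzero, hfirst, add_zero]
  have hsumF : ∀ s : ℝ, (∑ l ∈ Finset.range (n + 3), F l s)
      = g s * B s / ((n + 1)! : ℝ) := by
    intro s
    rw [hB s, hsub, Finset.mul_sum, Finset.sum_div]
    refine Finset.sum_congr rfl fun l _ => ?_
    simp only [hF, hc]
    ring
  have hvanish : ∀ s : ℝ, s ∉ Set.Ioc t b0 → g s * B s / ((n + 1)! : ℝ) = 0 := by
    intro s hs
    rw [Set.mem_Ioc] at hs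
    have hBz : B s = 0 := by
      rw [hB s, hsub]
      rcases not_and_or.mp hs with hs1 | hs2
      · push_neg at hs1
        have H := alt_sum_shift (n + 2) h t s (k := n + 1) (by omega)
        rw [← H]
        refine Finset.sum_congr rfl fun l hl => ?_
        congr 1
        congr 1
        apply max_eq_left
        have h1 : (0 : ℝ) ≤ (l : ℝ) * h := mul_nonneg (Nat.cast_nonneg l) hh.le
        linarith
      · push_neg at hs2
        refine Finset.sum_eq_zero fun l hl => ?_
        have hl' : l ≤ n + 2 := Nat.lt_succ_iff.mp (Finset.mem_range.mp hl)
        have h1 : (l : ℝ) * h ≤ ((n + 2 : ℕ) : ℝ) * h :=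
          mul_le_mul_of_nonneg_right (by exact_mod_cast hl') hh.le
        have h2 : t + (l : ℝ) * h - s < 0 := by
          rw [hb0] at hs2
          linarith
        rw [max_eq_right h2.le, zero_pow (by omega : n + 1 ≠ 0)]
        ring
    rw [hBz]
    ring
  have htb0 : t ≤ b0 := by
    have h1 : (0 : ℝ) ≤ ((n + 2 : ℕ) : ℝ) * h := mul_nonneg (Nat.cast_nonneg _) hh.le
    rw [hb0]; linarith
  calc ∫ s : ℝ, g s * B s / ((Nat.factorial (n + 2 - 1) : ℕ) : ℝ)
      = ∫ s in Set.Ioc t b0, g s * B s / ((n + 1)! : ℝ) := by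
        rw [hsub]
        exact (setIntegral_eq_integral_of_forall_compl_eq_zero hvanish).symm
    _ = ∫ s in t..b0, g s * B s / ((n + 1)! : ℝ) := (intervalIntegral.integral_of_le htb0).symm
    _ = ∫ s in t..b0, ∑ l ∈ Finset.range (n + 3), F l s := by
        apply intervalIntegral.integral_congr
        intro s _
        exact (hsumF s).symm
    _ = ∑ l ∈ Finset.range (n + 3), ∫ s in t..b0, F l s := by
        apply intervalIntegral.integral_finset_sum
        intro l _
        exact (hFcont l).intervalIntegrable _ _
    _ = ∑ l ∈ Finset.range (n + 3), c l * R l :=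
        Finset.sum_congr rfl fun l hl => (hRpart l hl).symm
    _ = ∑ l ∈ Finset.range (n + 3), c l * (y (t + (l : ℝ) * h) - T l) := by
        refine Finset.sum_congr rfl fun l _ => ?_
        rw [hdecomp l]
        ring
    _ = (∑ l ∈ Finset.range (n + 3), c l * y (t + (l : ℝ) * h))
        - ∑ l ∈ Finset.range (n + 3), c l * T l := by
        rw [← Finset.sum_sub_distrib]
        exact Finset.sum_congr rfl fun l _ => by ring
    _ = ∑ l ∈ Finset.range (n + 2 + 1),
          (-1 : ℝ) ^ (n + 2 - l) * ((n + 2).choose l) * y (t + l * h) := by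
        rw [hTpart, sub_zero]
end
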